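/- Define U on ℤ[[q]] by U(Σ a_n q^n) = Σ a_{2n} q^n, let f(q) = q·∏_{n≥1}(1+q^n)^{24}, and define X_k := U(f^k) for k ≥ 0. Assuming U(f) = 24f + 2^{11}f^2 and f(q)f(-q) = -f(q^2), prove that X_0 = 1, X_1 = 24f + 2^{11}f^2, and for k ≥ 2, X_k = (48f + 2^{12}f^2)·X_{k-1} + f·X_{k-2}. In particular, U(f^k) is a polynomial in f with integer coefficients of degree at most 2k. -/

import Mathlib

open PowerSeries Finset

/-- The operator `U = U_2` on `q`-expansions: `U(Σ aₙ qⁿ) = Σ a_{2n} qⁿ`. -/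
noncomputable def U2 (f : PowerSeries ℤ) : PowerSeries ℤ :=
  PowerSeries.mk fun n => coeff (2 * n) f

/-- `f(q²)`: the power series obtained by substituting `q²` for `q`. -/
noncomputable def evalSq (f : PowerSeries ℤ) : PowerSeries ℤ :=
  PowerSeries.mk fun n => if n % 2 = 0 then coeff (n / 2) f else 0

lemma coeff_U2 (g : PowerSeries ℤ) (n : ℕ) : coeff n (U2 g) = coeff (2 * n) g := by
  simp [U2]

lemma U2_add (a b : PowerSeries ℤ) : U2 (a + b) = U2 a + U2 b := by
  ext n; simp [coeff_U2]

lemma U2_one : U2 (1 : PowerSeries ℤ) = 1 := by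
  ext n
  rw [coeff_U2]
  simp [PowerSeries.coeff_one]

lemma U2_evalSq_mul (h g : PowerSeries ℤ) : U2 (evalSq h * g) = h * U2 g := by
  ext n
  rw [coeff_U2, PowerSeries.coeff_mul, PowerSeries.coeff_mul]
  rw [← Finset.sum_filter_add_sum_filter_not (Finset.HasAntidiagonal.antidiagonal (2*n)) (fun p => p.1 % 2 = 0)]
  have h2 : ∑ p ∈ (Finset.HasAntidiagonal.antidiagonal (2*n)).filter (fun p => ¬ p.1 % 2 = 0),
      coeff p.1 (evalSq h) * coeff p.2 g = 0 := by
    apply Finset.sum_eq_zero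
    intro p hp
    simp only [Finset.mem_filter] at hp
    simp [evalSq, hp.2]
  rw [h2, add_zero]
  refine Finset.sum_bij' (fun p _ => (p.1 / 2, p.2 / 2)) (fun p _ => (2 * p.1, 2 * p.2)) ?_ ?_ ?_ ?_ ?_
  · intro p hp
    simp only [Finset.mem_filter, Finset.HasAntidiagonal.mem_antidiagonal] at hp ⊢
    omega
  · intro p hp
    simp only [Finset.mem_filter, Finset.HasAntidiagonal.mem_antidiagonal] at hp ⊢
    omega
  · intro p hp
    simp only [Finset.mem_filter, Finset.HasAntidiagonal.mem_antidiagonal] at hp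
    ext <;> simp <;> omega
  · intro p hp; ext <;> simp <;> omega
  · intro p hp
    simp only [Finset.mem_filter, Finset.HasAntidiagonal.mem_antidiagonal] at hp
    simp only [evalSq, coeff_mk, hp.2, if_pos]
    rw [coeff_U2]
    have h3 : 2 * (p.2 / 2) = p.2 := by omega
    rw [h3]

lemma add_rescale (f : PowerSeries ℤ) :
    f + rescale (-1) f = evalSq (2 * U2 f) := by
  ext n
  simp only [map_add, PowerSeries.coeff_rescale, evalSq, coeff_mk]
  by_cases hn : n % 2 = 0
  · rw [if_pos hn]
    have : (-1 : ℤ) ^ n = 1 := Even.neg_one_pow (Nat.even_iff.mpr hn)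
    rw [this, one_mul]
    have h2 : (2 : PowerSeries ℤ) * U2 f = U2 f + U2 f := by ring
    rw [h2, map_add, coeff_U2]
    have : 2 * (n / 2) = n := by omega
    rw [this]
  · rw [if_neg hn]
    have : (-1 : ℤ) ^ n = -1 := Odd.neg_one_pow (Nat.odd_iff.mpr (by omega))
    rw [this]; ring

/-- With `X_k := U(f^k)`: `X₀ = 1`, `X₁ = 24f + 2^{11}f²`, the recurrence
`X_k = (48f + 2^{12}f²)·X_{k-1} + f·X_{k-2}` for `k ≥ 2`, and in particular each
`U(f^k)` is an integer polynomial in `f` of degree at most `2k`. -/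
theorem U2_f_pow (f : PowerSeries ℤ)
    (hf : ∀ N, trunc N f =
      trunc N ((X : PowerSeries ℤ) * ∏ n ∈ Finset.range N, (1 + X ^ (n + 1)) ^ 24))
    (hU : U2 f = 24 * f + 2 ^ 11 * f ^ 2)
    (hneg : f * rescale (-1) f = -evalSq f) :
    U2 (f ^ 0) = 1 ∧
    U2 (f ^ 1) = 24 * f + 2 ^ 11 * f ^ 2 ∧
    (∀ k : ℕ, 2 ≤ k →
      U2 (f ^ k) = (48 * f + 2 ^ 12 * f ^ 2) * U2 (f ^ (k - 1)) + f * U2 (f ^ (k - 2))) ∧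
    (∀ k : ℕ, ∃ P : Polynomial ℤ, P.natDegree ≤ 2 * k ∧ U2 (f ^ k) = Polynomial.aeval f P) := by
  have h0 : U2 (f ^ 0) = 1 := by rw [pow_zero, U2_one]
  have h1 : U2 (f ^ 1) = 24 * f + 2 ^ 11 * f ^ 2 := by rw [pow_one, hU]
  have hsq : f ^ 2 = evalSq (2 * U2 f) * f + evalSq f := by
    have h2 : f ^ 2 = (f + rescale (-1) f) * f - f * rescale (-1) f := by ring
    rw [h2, add_rescale f, hneg]; ring
  have hS : 2 * U2 f = 48 * f + 2 ^ 12 * f ^ 2 := by rw [hU]; ring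
  have hrec : ∀ m : ℕ, U2 (f ^ (m + 2)) =
      (48 * f + 2 ^ 12 * f ^ 2) * U2 (f ^ (m + 1)) + f * U2 (f ^ m) := by
    intro m
    have hdec : f ^ (m + 2) = evalSq (2 * U2 f) * f ^ (m + 1) + evalSq f * f ^ m := by
      calc f ^ (m + 2) = f ^ m * f ^ 2 := by ring
        _ = f ^ m * (evalSq (2 * U2 f) * f + evalSq f) := by rw [hsq]
        _ = evalSq (2 * U2 f) * f ^ (m + 1) + evalSq f * f ^ m := by ring
    rw [hdec, U2_add, U2_evalSq_mul, U2_evalSq_mul, hS]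
  refine ⟨h0, h1, ?_, ?_⟩
  · intro k hk
    obtain ⟨m, rfl⟩ : ∃ m, k = m + 2 := ⟨k - 2, by omega⟩
    simpa using hrec m
  · intro k
    induction k using Nat.strong_induction_on with
    | _ k ih =>
      match k with
      | 0 => exact ⟨1, by simp, by rw [h0]; simp⟩
      | 1 =>
        refine ⟨24 * Polynomial.X + 2 ^ 11 * Polynomial.X ^ 2, ?_, ?_⟩
        · apply le_trans (Polynomial.natDegree_add_le _ _)
          simp only [max_le_iff]
          constructor
          · apply le_trans (Polynomial.natDegree_mul_le)
            simp [Polynomial.natDegree_X]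
          · apply le_trans (Polynomial.natDegree_mul_le)
            simp
        · rw [h1]; simp [map_ofNat]
      | (m + 2) =>
        obtain ⟨P, hP, hPe⟩ := ih (m + 1) (by omega)
        obtain ⟨Q, hQ, hQe⟩ := ih m (by omega)
        refine ⟨(48 * Polynomial.X + 2 ^ 12 * Polynomial.X ^ 2) * P + Polynomial.X * Q, ?_, ?_⟩
        · apply le_trans (Polynomial.natDegree_add_le _ _)
          simp only [max_le_iff]
          constructor
          · apply le_trans (Polynomial.natDegree_mul_le)
            have : (48 * Polynomial.X + 2 ^ 12 * Polynomial.X ^ 2 : Polynomial ℤ).natDegree ≤ 2 := by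
              apply le_trans (Polynomial.natDegree_add_le _ _)
              simp only [max_le_iff]
              refine ⟨le_trans Polynomial.natDegree_mul_le ?_, le_trans Polynomial.natDegree_mul_le ?_⟩ <;> simp
            omega
          · apply le_trans (Polynomial.natDegree_mul_le)
            have := Polynomial.natDegree_X_le (R := ℤ)
            omega
        · rw [hrec m, hPe, hQe]
          simp [mul_comm, map_ofNat]
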